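/- Let h ∈ ℤ[x] be primitive and irreducible over ℚ with a complex root α, let f₁,…,fₘ ∈ ℤ[x₁,…,xₙ] and g₁,…,gₙ ∈ ℤ[x] satisfy fₖ(g₁(α),…,gₙ(α)) = 0 for all k. If p is a prime such that the reduction of h mod p has a root ᾱ ∈ ℤ/pℤ, then (g₁(ᾱ),…,gₙ(ᾱ)) is a solution of f₁ = ⋯ = fₘ = 0 in (ℤ/pℤ)ⁿ. -/

import Mathlib

theorem stmt_4 (n m : ℕ) (h : Polynomial ℤ) (α : ℂ)
    (f : Fin m → MvPolynomial (Fin n) ℤ) (g : Fin n → Polynomial ℤ)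
    (hirr : Irreducible (h.map (Int.castRingHom ℚ)))
    (hprim : h.IsPrimitive)
    (hα : Polynomial.aeval α h = 0)
    (hsol : ∀ k, MvPolynomial.aeval (fun i => Polynomial.aeval α (g i)) (f k) = 0)
    (p : ℕ) (hp : p.Prime) (ᾱ : ZMod p) (hᾱ : Polynomial.aeval ᾱ h = 0) :
    ∀ k, MvPolynomial.aeval (fun i => Polynomial.aeval ᾱ (g i)) (f k) = 0 := by
  have e : (Int.castRingHom ℚ) = algebraMap ℤ ℚ := rfl
  intro k
  set F : Polynomial ℤ := MvPolynomial.aeval g (f k) with hF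
  -- It suffices to show h ∣ F
  suffices hdvd : h ∣ F by
    obtain ⟨c, hc⟩ := hdvd
    have h0 : Polynomial.aeval ᾱ F = 0 := by rw [hc]; simp [hᾱ]
    rw [hF, MvPolynomial.comp_aeval_apply (f := g) (Polynomial.aeval ᾱ) (f k)] at h0
    exact h0
  have hFα : Polynomial.aeval α F = 0 := by
    rw [hF, MvPolynomial.comp_aeval_apply (f := g) (Polynomial.aeval α) (f k)]
    exact hsol k
  by_cases hF0 : F = 0
  · simp [hF0]
  have hmapne : h.map (Int.castRingHom ℚ) ≠ 0 := hirr.ne_zero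
  have hαQ : Polynomial.aeval α (h.map (Int.castRingHom ℚ)) = 0 := by
    rw [e, Polynomial.aeval_map_algebraMap]; exact hα
  have hFαQ : Polynomial.aeval α (F.map (Int.castRingHom ℚ)) = 0 := by
    rw [e, Polynomial.aeval_map_algebraMap]; exact hFα
  have hint : IsIntegral ℚ α := (IsAlgebraic.isIntegral ⟨_, hmapne, hαQ⟩)
  have hd1 : minpoly ℚ α ∣ h.map (Int.castRingHom ℚ) := minpoly.dvd ℚ α hαQ
  have hd2 : minpoly ℚ α ∣ F.map (Int.castRingHom ℚ) := minpoly.dvd ℚ α hFαQ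
  have hassoc : Associated (minpoly ℚ α) (h.map (Int.castRingHom ℚ)) :=
    (minpoly.irreducible hint).associated_of_dvd hirr hd1
  have hd3 : h.map (Int.castRingHom ℚ) ∣ F.map (Int.castRingHom ℚ) :=
    hassoc.symm.dvd.trans hd2
  -- pass to the primitive part of F
  have hc0 : ((F.content : ℚ)) ≠ 0 := by
    exact_mod_cast fun hcon => hF0 (Polynomial.content_eq_zero_iff.mp (by exact_mod_cast hcon))
  have hFsplit : F.map (Int.castRingHom ℚ)
      = Polynomial.C (F.content : ℚ) * F.primPart.map (Int.castRingHom ℚ) := by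
    conv_lhs => rw [F.eq_C_content_mul_primPart]
    simp
  have hpp : h.map (Int.castRingHom ℚ) ∣ F.primPart.map (Int.castRingHom ℚ) := by
    obtain ⟨w, hw⟩ := hd3
    refine ⟨Polynomial.C ((F.content : ℚ))⁻¹ * w, ?_⟩
    have key : Polynomial.C (F.content : ℚ) * F.primPart.map (Int.castRingHom ℚ)
        = h.map (Int.castRingHom ℚ) * w := by rw [← hFsplit, hw]
    calc F.primPart.map (Int.castRingHom ℚ)
        = Polynomial.C ((F.content : ℚ))⁻¹ *
            (Polynomial.C (F.content : ℚ) * F.primPart.map (Int.castRingHom ℚ)) := by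
          rw [← mul_assoc, ← Polynomial.C_mul, inv_mul_cancel₀ hc0, Polynomial.C_1, one_mul]
      _ = Polynomial.C ((F.content : ℚ))⁻¹ * (h.map (Int.castRingHom ℚ) * w) := by rw [key]
      _ = h.map (Int.castRingHom ℚ) * (Polynomial.C ((F.content : ℚ))⁻¹ * w) := by ring
  have : h ∣ F.primPart :=
    (Polynomial.IsPrimitive.Int.dvd_iff_map_cast_dvd_map_cast h F.primPart hprim
      ).mpr hpp
  exact this.trans F.primPart_dvd
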